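/- For the tangent line family to the sine curve, the discriminant set D = {(X,Y) ∈ ℝ² : ∃ t, F(X,Y,t) = 0 and ∂F/∂t(X,Y,t) = 0}, where F(X,Y,t) = -X cos t + Y + t cos t - sin t, equals the union of the sine curve {Y = sin X} with the lines {Y = X - 2kπ : k ∈ ℤ} and {Y = -X + (2k+1)π : k ∈ ℤ}; in particular D strictly contains the sine curve. -/

import Mathlib

open Real

noncomputable def Fsine (X Y t : ℝ) : ℝ :=
  -X * Real.cos t + Y + t * Real.cos t - Real.sin t

lemma deriv_Fsine (X Y t : ℝ) : deriv (Fsine X Y) t = (X - t) * Real.sin t := by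
  have h : HasDerivAt (Fsine X Y)
      (-X * (-Real.sin t) + (1 * Real.cos t + t * (-Real.sin t)) - Real.cos t) t := by
    unfold Fsine
    have := ((((Real.hasDerivAt_cos t).const_mul (-X)).add_const Y).add
      ((hasDerivAt_id t).mul (Real.hasDerivAt_cos t))).sub (Real.hasDerivAt_sin t)
    have e : (fun t => -X * Real.cos t + Y + t * Real.cos t - Real.sin t) =
        (fun x => -X * Real.cos x + Y) + id * Real.cos - Real.sin := by
      funext x; simp
    rw [e]
    exact this.congr_deriv (by simp)
  rw [h.deriv]; ring

theorem discriminant_of_sine_tangent_family :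
    {p : ℝ × ℝ | ∃ t : ℝ, Fsine p.1 p.2 t = 0 ∧ deriv (Fsine p.1 p.2) t = 0} =
      {p : ℝ × ℝ | (∃ k : ℤ, p.2 = p.1 - 2 * (k : ℝ) * Real.pi) ∨
        (∃ k : ℤ, p.2 = -p.1 + (2 * (k : ℝ) + 1) * Real.pi) ∨
        p.2 = Real.sin p.1} ∧
    {p : ℝ × ℝ | p.2 = Real.sin p.1} ⊂
      {p : ℝ × ℝ | ∃ t : ℝ, Fsine p.1 p.2 t = 0 ∧ deriv (Fsine p.1 p.2) t = 0} := by
  constructor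
  · ext p
    simp only [Set.mem_setOf_eq, deriv_Fsine]
    constructor
    · rintro ⟨t, hF, hD⟩
      rcases mul_eq_zero.1 hD with h | h
      · right; right
        have ht : t = p.1 := by linarith
        subst ht
        unfold Fsine at hF
        linarith
      · obtain ⟨k, hk⟩ := Real.sin_eq_zero_iff.1 h
        unfold Fsine at hF
        rcases Int.even_or_odd k with ⟨m, hm⟩ | ⟨m, hm⟩
        · left; refine ⟨m, ?_⟩
          have ht : t = (m : ℝ) * (2 * Real.pi) := by
            rw [← hk, hm]; push_cast; ring
          have hs0 : Real.sin ((m:ℝ) * (2 * Real.pi)) = 0 :=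
            Real.sin_eq_zero_iff.2 ⟨2 * m, by push_cast; ring⟩
          rw [ht, Real.cos_int_mul_two_pi, hs0] at hF
          nlinarith [Real.pi_pos]
        · right; left; refine ⟨m, ?_⟩
          have ht : t = (2 * (m : ℝ) + 1) * Real.pi := by
            rw [← hk, hm]; push_cast; ring
          have hc : Real.cos t = -1 := by
            rw [ht]
            have := Real.cos_int_mul_two_pi_add_pi m
            rw [show (2 * (m : ℝ) + 1) * Real.pi = (m : ℝ) * (2 * Real.pi) + Real.pi by ring]
            exact this
          have hs : Real.sin t = 0 := h
          rw [hc, hs, ht] at hF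
          nlinarith [Real.pi_pos]
    · rintro (⟨k, hk⟩ | ⟨k, hk⟩ | hk)
      · refine ⟨2 * (k : ℝ) * Real.pi, ?_, ?_⟩
        · unfold Fsine
          have hc : Real.cos (2 * (k : ℝ) * Real.pi) = 1 := by
            rw [show 2 * (k : ℝ) * Real.pi = (k : ℝ) * (2 * Real.pi) by ring]
            exact Real.cos_int_mul_two_pi k
          have hs : Real.sin (2 * (k : ℝ) * Real.pi) = 0 := by
            rw [show 2 * (k : ℝ) * Real.pi = (k : ℝ) * (2 * Real.pi) by ring]
            exact Real.sin_eq_zero_iff.2 ⟨2 * k, by push_cast; ring⟩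
          rw [hc, hs, hk]; ring
        · have hs : Real.sin (2 * (k : ℝ) * Real.pi) = 0 := by
            rw [show 2 * (k : ℝ) * Real.pi = (k : ℝ) * (2 * Real.pi) by ring]
            exact Real.sin_eq_zero_iff.2 ⟨2 * k, by push_cast; ring⟩
          rw [hs]; ring
      · refine ⟨(2 * (k : ℝ) + 1) * Real.pi, ?_, ?_⟩
        · unfold Fsine
          have hc : Real.cos ((2 * (k : ℝ) + 1) * Real.pi) = -1 := by
            rw [show (2 * (k : ℝ) + 1) * Real.pi = (k : ℝ) * (2 * Real.pi) + Real.pi by ring]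
            exact Real.cos_int_mul_two_pi_add_pi k
          have hs : Real.sin ((2 * (k : ℝ) + 1) * Real.pi) = 0 := by
            apply Real.sin_eq_zero_iff.2
            exact ⟨2 * k + 1, by push_cast; ring⟩
          rw [hc, hs, hk]; ring
        · have hs : Real.sin ((2 * (k : ℝ) + 1) * Real.pi) = 0 := by
            apply Real.sin_eq_zero_iff.2
            exact ⟨2 * k + 1, by push_cast; ring⟩
          rw [hs]; ring
      · exact ⟨p.1, by unfold Fsine; rw [hk]; ring, by ring⟩
  · constructor
    · rintro p hp
      exact ⟨p.1, by unfold Fsine; simp only [Set.mem_setOf_eq] at hp; rw [hp]; ring,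
        by rw [deriv_Fsine]; ring⟩
    · intro hsub
      have h1 : ((1 : ℝ), (1 : ℝ)) ∈ {p : ℝ × ℝ | ∃ t : ℝ, Fsine p.1 p.2 t = 0 ∧ deriv (Fsine p.1 p.2) t = 0} := by
        refine ⟨0, ?_, ?_⟩
        · unfold Fsine; simp
        · rw [deriv_Fsine]; simp
      have h2 := hsub h1
      simp only [Set.mem_setOf_eq] at h2
      have := Real.sin_lt (by norm_num : (0:ℝ) < 1)
      linarith
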